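/- Let (F(x), σ) be a ΠΣ-field extension of (F, σ) with σ(x)/x ∈ F* (Π-case), and let f ∈ F[x] be nonzero with per(f) > 0. Then f = c · x^m for some c ∈ F* and m ∈ ℕ. -/

import Mathlib

/-- In a Π-extension F(x) of F (σ(x)/x ∈ F*), a nonzero polynomial f ∈ F[x] with
positive period must be of the form c·x^m with c ∈ F* and m ∈ ℕ. -/
theorem stmt2 {F : Type*} [Field F] (σ : RatFunc F ≃+* RatFunc F)
    (hF : ∀ a : F, ∃ b : F, σ (RatFunc.C a) = RatFunc.C b)
    (hx : ∃ u : F, u ≠ 0 ∧ σ RatFunc.X = RatFunc.C u * RatFunc.X)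
    (hconst : ∀ h : RatFunc F, σ h = h → ∃ a : F, h = RatFunc.C a)
    (f : Polynomial F) (hf : f ≠ 0)
    (hper : ∃ n : ℕ, 1 ≤ n ∧ ∃ a : F,
      (⇑σ)^[n] (algebraMap (Polynomial F) (RatFunc F) f)
        = RatFunc.C a * algebraMap (Polynomial F) (RatFunc F) f) :
    ∃ (c : F) (m : ℕ), c ≠ 0 ∧ f = Polynomial.C c * Polynomial.X ^ m := by
  classical
  obtain ⟨u, hu0, hu⟩ := hx
  choose τ hτ using hF
  obtain ⟨n, hn1, a, ha⟩ := hper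
  have hCinj : Function.Injective (RatFunc.C (K := F)) := (RatFunc.C (K := F)).injective
  have hπinj : Function.Injective (algebraMap (Polynomial F) (RatFunc F)) :=
    IsFractionRing.injective _ _
  -- τ sends nonzero to nonzero
  have hτne : ∀ b : F, b ≠ 0 → τ b ≠ 0 := by
    intro b hb h0
    apply hb
    have h1 : σ (RatFunc.C b) = 0 := by rw [hτ b, h0, map_zero]
    have h2 : RatFunc.C b = 0 := by
      apply σ.injective; rw [h1, map_zero]
    have := hCinj (a₁ := b) (a₂ := 0) (by rw [map_zero]; exact h2)
    exact this
  -- iterates of σ on constants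
  have hitC : ∀ (k : ℕ) (b : F), (⇑σ)^[k] (RatFunc.C b) = RatFunc.C (τ^[k] b) := by
    intro k
    induction k with
    | zero => simp
    | succ k ih =>
      intro b
      rw [Function.iterate_succ_apply', ih b, hτ, Function.iterate_succ_apply']
  have hτitne : ∀ (k : ℕ) (b : F), b ≠ 0 → τ^[k] b ≠ 0 := by
    intro k
    induction k with
    | zero => intro b hb; simpa using hb
    | succ k ih =>
      intro b hb
      rw [Function.iterate_succ_apply']
      exact hτne _ (ih b hb)
  -- iterates are multiplicative etc.
  have hitmul : ∀ (k : ℕ) (x y : RatFunc F), (⇑σ)^[k] (x * y) = (⇑σ)^[k] x * (⇑σ)^[k] y := by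
    intro k
    induction k with
    | zero => simp
    | succ k ih =>
      intro x y
      simp only [Function.iterate_succ_apply', ih x y, map_mul]
  have hitinv : ∀ (k : ℕ) (x : RatFunc F), (⇑σ)^[k] x⁻¹ = ((⇑σ)^[k] x)⁻¹ := by
    intro k
    induction k with
    | zero => simp
    | succ k ih =>
      intro x
      simp only [Function.iterate_succ_apply', ih x, map_inv₀]
  have hitpow : ∀ (k : ℕ) (x : RatFunc F) (d : ℕ), (⇑σ)^[k] (x ^ d) = ((⇑σ)^[k] x) ^ d := by
    intro k
    induction k with
    | zero => simp
    | succ k ih =>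
      intro x d
      simp only [Function.iterate_succ_apply', ih x d, map_pow]
  have hitsum : ∀ (k : ℕ) (s : Finset ℕ) (g : ℕ → RatFunc F),
      (⇑σ)^[k] (∑ j ∈ s, g j) = ∑ j ∈ s, (⇑σ)^[k] (g j) := by
    intro k
    induction k with
    | zero => simp
    | succ k ih =>
      intro s g
      simp only [Function.iterate_succ_apply', ih s g, map_sum]
  -- τ iterates are multiplicative / preserve inverses
  have hτitmul : ∀ (k : ℕ) (x y : F), τ^[k] (x * y) = τ^[k] x * τ^[k] y := by
    intro k x y
    apply hCinj
    rw [map_mul, ← hitC, ← hitC, ← hitC, map_mul, hitmul]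
  have hτitinv : ∀ (k : ℕ) (x : F), τ^[k] x⁻¹ = (τ^[k] x)⁻¹ := by
    intro k x
    apply hCinj
    rw [map_inv₀, ← hitC, ← hitC, map_inv₀, hitinv]
  -- iterates of σ on X
  have hitX : ∀ k : ℕ, ∃ v : F, v ≠ 0 ∧ (⇑σ)^[k] RatFunc.X = RatFunc.C v * RatFunc.X := by
    intro k
    induction k with
    | zero => exact ⟨1, one_ne_zero, by simp⟩
    | succ k ih =>
      obtain ⟨v, hv0, hv⟩ := ih
      refine ⟨τ v * u, mul_ne_zero (hτne v hv0) hu0, ?_⟩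
      rw [Function.iterate_succ_apply', hv, map_mul, hτ, hu, map_mul]
      ring
  obtain ⟨Un, hUn0, hUnX⟩ := hitX n
  -- express the image of f as a sum
  have hπf : algebraMap (Polynomial F) (RatFunc F) f
      = ∑ j ∈ f.support, RatFunc.C (f.coeff j) * RatFunc.X ^ j := by
    conv_lhs => rw [Polynomial.as_sum_support f]
    rw [map_sum]
    refine Finset.sum_congr rfl fun j _ => ?_
    rw [← Polynomial.C_mul_X_pow_eq_monomial, map_mul, map_pow, RatFunc.algebraMap_C,
      RatFunc.algebraMap_X]
  -- the key coefficient identity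
  have key : ∀ i : ℕ, (if i ∈ f.support then τ^[n] (f.coeff i) * Un ^ i else 0)
      = a * f.coeff i := by
    have hL : (⇑σ)^[n] (algebraMap (Polynomial F) (RatFunc F) f)
        = algebraMap (Polynomial F) (RatFunc F)
          (∑ j ∈ f.support, Polynomial.C (τ^[n] (f.coeff j) * Un ^ j) * Polynomial.X ^ j) := by
      rw [hπf, hitsum, map_sum]
      refine Finset.sum_congr rfl fun j _ => ?_
      rw [hitmul, hitC, hitpow, hUnX, mul_pow]
      simp [map_mul, map_pow, RatFunc.algebraMap_C, RatFunc.algebraMap_X, mul_assoc]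
    have hR : RatFunc.C a * algebraMap (Polynomial F) (RatFunc F) f
        = algebraMap (Polynomial F) (RatFunc F) (Polynomial.C a * f) := by
      rw [map_mul, RatFunc.algebraMap_C]
    have hpoly : (∑ j ∈ f.support, Polynomial.C (τ^[n] (f.coeff j) * Un ^ j) * Polynomial.X ^ j)
        = Polynomial.C a * f := by
      apply hπinj
      rw [← hL, ← hR, ha]
    intro i
    have := congrArg (fun p => Polynomial.coeff p i) hpoly
    simp only [Polynomial.finset_sum_coeff, Polynomial.coeff_C_mul, Polynomial.coeff_X_pow,
      mul_ite, mul_one, mul_zero, Finset.sum_ite_eq] at this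
    exact this
  set m := f.natDegree with hm
  have hmmem : m ∈ f.support := Polynomial.natDegree_mem_support_of_nonzero hf
  have ham : f.coeff m ≠ 0 := Polynomial.mem_support_iff.mp hmmem
  have keym : τ^[n] (f.coeff m) * Un ^ m = a * f.coeff m := by
    have := key m; rwa [if_pos hmmem] at this
  have ha0 : a ≠ 0 := by
    intro h0
    apply mul_ne_zero (hτitne n _ ham) (pow_ne_zero m hUn0)
    rw [keym, h0, zero_mul]
  -- every element of the support equals m
  have hsub : ∀ i ∈ f.support, i = m := by
    intro i hi
    by_contra hne
    have hai : f.coeff i ≠ 0 := Polynomial.mem_support_iff.mp hi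
    have hilt : i < m := lt_of_le_of_ne (Polynomial.le_natDegree_of_ne_zero hai) hne
    have keyi : τ^[n] (f.coeff i) * Un ^ i = a * f.coeff i := by
      have := key i; rwa [if_pos hi] at this
    set d := m - i with hd
    have hid : i + d = m := by omega
    have hd0 : 0 < d := by omega
    set c0 : F := f.coeff m * (f.coeff i)⁻¹ with hc0
    have hc00 : c0 ≠ 0 := mul_ne_zero ham (inv_ne_zero hai)
    set h : RatFunc F := RatFunc.C c0 * RatFunc.X ^ d with hhdef
    have hh0 : h ≠ 0 := mul_ne_zero (by simpa using hc00) (pow_ne_zero d RatFunc.X_ne_zero)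
    -- each iterate of h has the form C e * X^d
    have hform : ∀ k : ℕ, ∃ e : F, e ≠ 0 ∧ (⇑σ)^[k] h = RatFunc.C e * RatFunc.X ^ d := by
      intro k
      obtain ⟨v, hv0, hv⟩ := hitX k
      refine ⟨τ^[k] c0 * v ^ d, mul_ne_zero (hτitne k _ hc00) (pow_ne_zero d hv0), ?_⟩
      rw [hhdef, hitmul, hitC, hitpow, hv, mul_pow, ← map_pow, ← mul_assoc, ← map_mul]
    -- the n-th iterate of h is h itself
    have hUm : Un ^ i * Un ^ d = Un ^ m := by rw [← pow_add, hid]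
    have goal' : τ^[n] (f.coeff m) * Un ^ d * f.coeff i = f.coeff m * τ^[n] (f.coeff i) := by
      apply mul_right_cancel₀ (pow_ne_zero i hUn0)
      calc τ^[n] (f.coeff m) * Un ^ d * f.coeff i * Un ^ i
          = τ^[n] (f.coeff m) * (Un ^ i * Un ^ d) * f.coeff i := by ring
        _ = τ^[n] (f.coeff m) * Un ^ m * f.coeff i := by rw [hUm]
        _ = a * f.coeff m * f.coeff i := by rw [keym]
        _ = f.coeff m * (a * f.coeff i) := by ring
        _ = f.coeff m * (τ^[n] (f.coeff i) * Un ^ i) := by rw [keyi]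
        _ = f.coeff m * τ^[n] (f.coeff i) * Un ^ i := by ring
    have hτni : τ^[n] (f.coeff i) ≠ 0 := hτitne n _ hai
    have hc0fix : τ^[n] c0 * Un ^ d = c0 := by
      rw [hc0, hτitmul, hτitinv]
      field_simp
      linear_combination goal'
    have hfix : (⇑σ)^[n] h = h := by
      rw [hhdef, hitmul, hitC, hitpow, hUnX, mul_pow, ← map_pow, ← mul_assoc, ← map_mul,
        hc0fix]
    -- build a σ-invariant element
    set N : RatFunc F := ∏ k ∈ Finset.range n, (⇑σ)^[k] h with hN
    have hσN : σ N = N := by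
      have h1 : σ N = ∏ k ∈ Finset.range n, (⇑σ)^[k + 1] h := by
        rw [hN, map_prod]
        exact Finset.prod_congr rfl fun k _ => (Function.iterate_succ_apply' σ k h).symm
      have h2 : (∏ k ∈ Finset.range n, (⇑σ)^[k + 1] h) * h
          = N * h := by
        have e1 := Finset.prod_range_succ' (fun k => (⇑σ)^[k] h) n
        have e2 := Finset.prod_range_succ (fun k => (⇑σ)^[k] h) n
        simp only [Function.iterate_zero_apply] at e1 e2
        rw [← e1, e2, hfix, hN]
      rw [h1]
      exact mul_right_cancel₀ hh0 h2
    obtain ⟨b, hb⟩ := hconst N hσN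
    -- compute the explicit form of N
    choose e he0 heq using hform
    have hNform : N = RatFunc.C (∏ k ∈ Finset.range n, e k) * RatFunc.X ^ (d * n) := by
      rw [hN]
      calc ∏ k ∈ Finset.range n, (⇑σ)^[k] h
          = ∏ k ∈ Finset.range n, RatFunc.C (e k) * RatFunc.X ^ d :=
            Finset.prod_congr rfl fun k _ => heq k
        _ = (∏ k ∈ Finset.range n, RatFunc.C (e k)) * (RatFunc.X ^ d) ^ n := by
            rw [Finset.prod_mul_distrib, Finset.prod_const, Finset.card_range]
        _ = RatFunc.C (∏ k ∈ Finset.range n, e k) * RatFunc.X ^ (d * n) := by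
            rw [map_prod, ← pow_mul]
    have hE0 : (∏ k ∈ Finset.range n, e k) ≠ 0 :=
      Finset.prod_ne_zero_iff.mpr fun k _ => he0 k
    -- contradiction: a nonconstant monomial cannot be constant
    have hpoly2 : Polynomial.C (∏ k ∈ Finset.range n, e k) * Polynomial.X ^ (d * n)
        = Polynomial.C b := by
      apply hπinj
      rw [map_mul, map_pow, RatFunc.algebraMap_C, RatFunc.algebraMap_X, RatFunc.algebraMap_C,
        ← hNform, hb]
    have hdn : d * n ≠ 0 := by positivity
    have := congrArg (fun p => Polynomial.coeff p (d * n)) hpoly2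
    simp only [Polynomial.coeff_C_mul, Polynomial.coeff_X_pow, if_pos rfl, mul_one,
      Polynomial.coeff_C, if_neg hdn] at this
    simp at this
    exact hE0 this
  -- conclude f = C (coeff m) * X^m
  have hsupp : f.support = {m} := by
    apply Finset.eq_singleton_iff_unique_mem.mpr
    exact ⟨hmmem, fun i hi => hsub i hi⟩
  refine ⟨f.coeff m, m, ham, ?_⟩
  conv_lhs => rw [Polynomial.as_sum_support f]
  rw [hsupp, Finset.sum_singleton, Polynomial.C_mul_X_pow_eq_monomial]
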